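/- Let G be a hereditarily non-topologizable group and let H be a subgroup of G. Then the abelianization H/[H,H] of H is finite. -/

import Mathlib

def NonTopologizable (G : Type*) [Group G] : Prop :=
  ∀ t : TopologicalSpace G, @IsTopologicalGroup G t _ → @T2Space G t → t = ⊥

def HereditarilyNonTopologizable (G : Type*) [Group G] : Prop :=
  ∀ (H : Subgroup G) (N : Subgroup ↥H) [N.Normal], NonTopologizable (↥H ⧸ N)

open Filter Topology Set

/-- The natural injective homomorphism `ℚ/ℤ → ℝ/ℤ`. -/
noncomputable def ratCircleToRealCircle : AddCircle (1 : ℚ) →+ AddCircle (1 : ℝ) :=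
  QuotientAddGroup.map _ _ (Rat.castHom ℝ).toAddMonoidHom (by
    intro x hx
    obtain ⟨k, hk⟩ := AddSubgroup.mem_zmultiples_iff.mp hx
    refine AddSubgroup.mem_comap.mpr (AddSubgroup.mem_zmultiples_iff.mpr ⟨k, ?_⟩)
    have : ((k • (1:ℚ) : ℚ) : ℝ) = k • (1:ℝ) := by simp
    rw [← this, hk]; rfl)

lemma ratCircleToRealCircle_injective : Function.Injective ratCircleToRealCircle := by
  intro x y h
  induction x using QuotientAddGroup.induction_on with
  | H q =>
  induction y using QuotientAddGroup.induction_on with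
  | H q' =>
  have hq : ratCircleToRealCircle (q : AddCircle (1:ℚ)) = ((q:ℝ) : AddCircle (1:ℝ)) :=
    QuotientAddGroup.map_mk' _ _ _ _ _
  have hq' : ratCircleToRealCircle (q' : AddCircle (1:ℚ)) = ((q':ℝ) : AddCircle (1:ℝ)) :=
    QuotientAddGroup.map_mk' _ _ _ _ _
  rw [hq, hq'] at h
  rw [QuotientAddGroup.eq_iff_sub_mem] at h ⊢
  obtain ⟨k, hk⟩ := AddSubgroup.mem_zmultiples_iff.mp h
  refine AddSubgroup.mem_zmultiples_iff.mpr ⟨k, ?_⟩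
  have : ((k • (1:ℚ) : ℚ) : ℝ) = k • (1:ℝ) := by simp
  apply Rat.cast_injective (α := ℝ)
  rw [this, hk]; push_cast; ring

/-- Characters into the real circle separate points of an abelian group. -/
lemma exists_realChar {A : Type*} [AddCommGroup A] {a : A} (ha : a ≠ 0) :
    ∃ χ : A →+ AddCircle (1 : ℝ), χ a ≠ 0 := by
  obtain ⟨c, hc⟩ := CharacterModule.exists_character_apply_ne_zero_of_ne_zero ha
  refine ⟨ratCircleToRealCircle.comp (c : A →+ AddCircle (1:ℚ)), fun h => hc ?_⟩
  have := ratCircleToRealCircle_injective (h.trans (map_zero ratCircleToRealCircle).symm)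
  exact this

/-- An additive abelian group whose only Hausdorff group topology is discrete is finite. -/
lemma finite_of_nonTop_additive (A : Type*) [AddCommGroup A]
    (h : ∀ t : TopologicalSpace A, @IsTopologicalAddGroup A t _ → @T2Space A t → t = ⊥) :
    Finite A := by
  by_contra hfin
  rw [not_finite_iff_infinite] at hfin
  haveI : Fact ((0:ℝ) < 1) := ⟨one_pos⟩
  set 𝕊 := AddCircle (1 : ℝ) with h𝕊
  -- the diagonal map into the product over all characters
  set ι : A →+ ((A →+ 𝕊) → 𝕊) :=
    { toFun := fun a χ => χ a
      map_zero' := by funext χ; exact map_zero χ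
      map_add' := fun a b => by funext χ; exact map_add χ a b } with hιdef
  have hι : Function.Injective ι := by
    intro a b hab
    by_contra hne
    obtain ⟨χ, hχ⟩ := exists_realChar (sub_ne_zero.mpr hne)
    apply hχ
    have hval : χ a = χ b := congrFun hab χ
    rw [map_sub, hval, sub_self]
  letI t : TopologicalSpace A := TopologicalSpace.induced ι inferInstance
  have htg : @IsTopologicalAddGroup A t _ := topologicalAddGroup_induced ι
  have ht2 : @T2Space A t := by
    have hemb : @Topology.IsEmbedding A ((A →+ 𝕊) → 𝕊) t _ ι := ⟨⟨rfl⟩, hι⟩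
    exact hemb.t2Space
  have hbot := h t htg ht2
  have hopen : @IsOpen A t {0} := by
    rw [show t = ⊥ from hbot]
    exact @isOpen_discrete _ ⊥ (discreteTopology_bot A) _
  rw [isOpen_induced_iff] at hopen
  obtain ⟨U, hU, hUeq⟩ := hopen
  have h0U : ι 0 ∈ U := by
    rw [← Set.mem_preimage, hUeq]; exact Set.mem_singleton _
  obtain ⟨sfin, u, hu, hsub⟩ := (isOpen_pi_iff.mp hU) (ι 0) h0U
  have hzero_mem : ∀ χ ∈ sfin, (0:𝕊) ∈ u χ := by
    intro χ hχ
    have h1 := (hu χ hχ).2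
    have h2 : ι 0 χ = 0 := by rw [map_zero]; rfl
    rwa [h2] at h1
  have key : ∀ a : A, (∀ χ ∈ sfin, χ a ∈ u χ) → a = 0 := by
    intro a haa
    have h1 : ι a ∈ U := hsub (fun χ hχ => haa χ hχ)
    have h2 : a ∈ ({0} : Set A) := by rw [← hUeq]; exact h1
    simpa using h2
  -- the map into the finite product
  set c : A →+ (↥sfin → 𝕊) :=
    { toFun := fun a χ => (χ : A →+ 𝕊) a
      map_zero' := by funext χ; exact map_zero _
      map_add' := fun a b => by funext χ; exact map_add _ a b } with hcdef
  have hc : Function.Injective c := by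
    intro a b hab
    have hsubzero : a - b = 0 := by
      refine key _ (fun χ hχ => ?_)
      have hval : (χ : A →+ 𝕊) a = (χ : A →+ 𝕊) b := congrFun hab ⟨χ, hχ⟩
      rw [map_sub, hval, sub_self]
      exact hzero_mem χ hχ
    exact sub_eq_zero.mp hsubzero
  haveI : Infinite A := hfin
  have hSinf : (Set.range c).Infinite := Set.infinite_range_of_injective hc
  obtain ⟨x, -, hx⟩ := hSinf.exists_accPt_of_subset_isCompact isCompact_univ
    (Set.subset_univ _)
  set W : Set (↥sfin → 𝕊) := Set.pi Set.univ (fun χ => u χ) with hWdef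
  have hWopen : IsOpen W := isOpen_set_pi Set.finite_univ (fun χ _ => (hu χ χ.2).1)
  have hW0 : (0 : ↥sfin → 𝕊) ∈ W := fun χ _ => hzero_mem χ χ.2
  have hWkey : ∀ a : A, c a ∈ W → a = 0 := fun a haW =>
    key a (fun χ hχ => haW ⟨χ, hχ⟩ (Set.mem_univ _))
  have hcont : Filter.Tendsto (fun p : (↥sfin → 𝕊) × (↥sfin → 𝕊) => p.1 - p.2)
      (𝓝 (x, x)) (𝓝 0) := by
    have h1 := (continuous_sub : Continuous fun p : (↥sfin → 𝕊) × (↥sfin → 𝕊) =>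
      p.1 - p.2).tendsto (x, x)
    simpa using h1
  have hWnhds : W ∈ 𝓝 (0 : ↥sfin → 𝕊) := hWopen.mem_nhds hW0
  have hpre := hcont hWnhds
  rw [Filter.mem_map, nhds_prod_eq, Filter.mem_prod_iff] at hpre
  obtain ⟨N1, hN1, N2, hN2, hN⟩ := hpre
  have hNmem : N1 ∩ N2 ∈ 𝓝 x := Filter.inter_mem hN1 hN2
  obtain ⟨y, ⟨hyN, hyS⟩, hyx⟩ := (accPt_iff_nhds).mp hx (N1 ∩ N2) hNmem
  obtain ⟨z, ⟨hzN, hzS⟩, hzx⟩ := (accPt_iff_nhds).mp hx ((N1 ∩ N2) ∩ {y}ᶜ)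
    (Filter.inter_mem hNmem (compl_singleton_mem_nhds (Ne.symm hyx)))
  obtain ⟨a, rfl⟩ := hyS
  obtain ⟨b, rfl⟩ := hzS
  have hmem : c a - c b ∈ W := by
    have hp : (c a, c b) ∈ N1 ×ˢ N2 := ⟨hyN.1, hzN.1.2⟩
    exact hN hp
  rw [← map_sub] at hmem
  have hab : a - b = 0 := hWkey _ hmem
  have hba : a = b := sub_eq_zero.mp hab
  exact hzN.2 (by rw [hba]; exact rfl)

/-- A commutative non-topologizable group is finite. -/
lemma finite_of_nonTop {A : Type*} [CommGroup A] (h : NonTopologizable A) : Finite A := by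
  have : Finite (Additive A) := by
    apply finite_of_nonTop_additive (Additive A)
    intro t htg ht2
    letI : TopologicalSpace A := t
    haveI hcm : ContinuousMul A := ⟨htg.toContinuousAdd.continuous_add⟩
    haveI hci : ContinuousInv A := ⟨htg.toContinuousNeg.continuous_neg⟩
    exact h t { toContinuousMul := hcm, toContinuousInv := hci } ht2
  exact this

theorem abelianization_finite {G : Type*} [Group G]
    (hG : HereditarilyNonTopologizable G) (H : Subgroup G) :
    Finite (Abelianization ↥H) := by
  have h := hG H (commutator ↥H)
  exact finite_of_nonTop h
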